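/- Consider the switched positive linear delay system dx/dt = A_{σ(t)}x(t) + (𝒫_{σ(t)}x)(t) + (Q_{σ(t)}∗x)(t), where σ : [0,∞) → {1,…,n} is a piecewise-constant switching signal, each Aᵢ is an n×n Metzler matrix, (𝒫ᵢx)(t) has k-th component pᵢᵏ x_k(t−dᵢᵏ) with constants pᵢᵏ ≥ 0 and delays dᵢᵏ ∈ [0,T], Qᵢ(t) = diag(qᵢ¹(t),…,qᵢⁿ(t)) with each qᵢᵏ : [0,∞) → ℝ₊ continuous and supported in [0,T], and (Qᵢ∗x)(t) = ∫₀^∞ Qᵢ(τ)x(t−τ)dτ. If x : [−T,∞) → ℝⁿ is continuous, differentiable on (0,∞), satisfies the delay equation for all t ≥ 0, and x(s) ≥ 0 componentwise for all s ∈ [−T,0], then x(t) ≥ 0 componentwise for all t ≥ 0. -/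

import Mathlib

open MeasureTheory Matrix
open scoped Kronecker

noncomputable section

/-- The 1-norm `‖x‖₁ = ∑ i |x i|`. -/
def oneNorm {ι : Type*} [Fintype ι] (x : ι → ℝ) : ℝ := ∑ i, |x i|

/-- A square real matrix is Metzler if its off-diagonal entries are nonnegative. -/
def IsMetzler {ι : Type*} [Fintype ι] (A : Matrix ι ι ℝ) : Prop :=
  ∀ i j, i ≠ j → 0 ≤ A i j

/-- A square real matrix is Hurwitz stable if all of its (complex) eigenvalues have
negative real parts. -/
def IsHurwitz {ι : Type*} [Fintype ι] [DecidableEq ι] (A : Matrix ι ι ℝ) : Prop :=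
  ∀ z ∈ spectrum ℂ (A.map (Complex.ofReal)), z.re < 0

/-- The matrix exponential `e^A`. -/
def matExp {ι : Type*} [Fintype ι] [DecidableEq ι] (A : Matrix ι ι ℝ) : Matrix ι ι ℝ :=
  NormedSpace.exp A

/-- The `i`-th canonical basis vector of `ℝⁿ`. -/
def basisVec {n : ℕ} (i : Fin n) : Fin n → ℝ := fun k => if k = i then 1 else 0

/-- Kronecker product of two vectors: `(u ⊗ v)_{(i,j)} = uᵢ vⱼ`. -/
def vecKron {n : ℕ} (u v : Fin n → ℝ) : Fin n × Fin n → ℝ := fun p => u p.1 * v p.2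

/-- Kronecker product `M ⊗ vᵀ` of an `n×n` matrix with a row vector: an `n × n²` matrix. -/
def matKronRow {n : ℕ} (M : Matrix (Fin n) (Fin n) ℝ) (v : Fin n → ℝ) :
    Matrix (Fin n) (Fin n × Fin n) ℝ := Matrix.of fun k p => M k p.1 * v p.2

/-- Kronecker product `u ⊗ F` of a column vector with an `n × n²` matrix: an `n² × n²` matrix. -/
def vecKronMat {n : ℕ} (u : Fin n → ℝ) (F : Matrix (Fin n) (Fin n × Fin n) ℝ) :
    Matrix (Fin n × Fin n) (Fin n × Fin n) ℝ := Matrix.of fun q p => u q.1 * F q.2 p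

/-- Kronecker product `rᵀ ⊗ Iₙ` of a row vector with the identity: an `n × n²` matrix
with block structure `[r₁ Iₙ … rₙ Iₙ]`. -/
def rowKronId {n : ℕ} (r : Fin n → ℝ) : Matrix (Fin n) (Fin n × Fin n) ℝ :=
  Matrix.of fun k p => r p.1 * (if k = p.2 then 1 else 0)

/-- Block-diagonal matrix `⨁ᵢ Aᵢ`. -/
def blockDiag {n : ℕ} (A : Fin n → Matrix (Fin n) (Fin n) ℝ) :
    Matrix (Fin n × Fin n) (Fin n × Fin n) ℝ :=
  Matrix.of fun q p => if q.1 = p.1 then A q.1 q.2 p.2 else 0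

/-- A piecewise-constant switching signal: constant between consecutive members of an
unbounded increasing sequence of switching times starting at `0`. -/
def PiecewiseConstant {α : Type*} (σ : ℝ → α) : Prop :=
  ∃ u : ℕ → ℝ, StrictMono u ∧ u 0 = 0 ∧ Filter.Tendsto u Filter.atTop Filter.atTop ∧
    ∀ k : ℕ, ∀ t ∈ Set.Ico (u k) (u (k + 1)), σ t = σ (u k)

/-- Right-hand side of the switched positive linear delay system
`dx/dt = A_{σ(t)} x(t) + (𝒫_{σ(t)} x)(t) + (Q_{σ(t)} ∗ x)(t)`, where
`(𝒫ᵢ x)(t)ₖ = pᵢᵏ xₖ(t − dᵢᵏ)` and `(Qᵢ ∗ x)(t)ₖ = ∫₀^∞ qᵢᵏ(τ) xₖ(t−τ) dτ`. -/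
def swRHS {n : ℕ} (σ : ℝ → Fin n) (A : Fin n → Matrix (Fin n) (Fin n) ℝ)
    (p : Fin n → Fin n → ℝ) (d : Fin n → Fin n → ℝ) (q : Fin n → Fin n → ℝ → ℝ)
    (x : ℝ → Fin n → ℝ) (t : ℝ) : Fin n → ℝ :=
  (A (σ t)).mulVec (x t) + (fun k => p (σ t) k * x (t - d (σ t) k) k) +
    ∫ τ in Set.Ici (0 : ℝ), (fun k => q (σ t) k τ * x (t - τ) k)

set_option maxHeartbeats 1600000 in
/-- positivity of solutions of the switched positive linear delay system. -/
theorem stmt1 (n : ℕ) (T : ℝ) (hT : 0 ≤ T)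
    (σ : ℝ → Fin n) (hσ : PiecewiseConstant σ)
    (A : Fin n → Matrix (Fin n) (Fin n) ℝ) (hA : ∀ i, IsMetzler (A i))
    (p : Fin n → Fin n → ℝ) (hp : ∀ i k, 0 ≤ p i k)
    (d : Fin n → Fin n → ℝ) (hd : ∀ i k, d i k ∈ Set.Icc (0 : ℝ) T)
    (q : Fin n → Fin n → ℝ → ℝ) (hqc : ∀ i k, Continuous (q i k))
    (hqnn : ∀ i k τ, 0 ≤ q i k τ)
    (hqsupp : ∀ i k, ∀ τ : ℝ, τ ∉ Set.Icc (0 : ℝ) T → q i k τ = 0)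
    (x : ℝ → Fin n → ℝ)
    (hxc : ContinuousOn x (Set.Ici (-T)))
    (hode : ∀ t > (0 : ℝ), HasDerivAt x (swRHS σ A p d q x t) t)
    (hode0 : HasDerivWithinAt x (swRHS σ A p d q x 0) (Set.Ici (0 : ℝ)) 0)
    (hinit : ∀ s ∈ Set.Icc (-T) (0 : ℝ), ∀ k, 0 ≤ x s k) :
    ∀ t ≥ (0 : ℝ), ∀ k, 0 ≤ x t k := by
  classical
  have hTneg : -T ≤ 0 := neg_nonpos.2 hT
  -- the constants
  set C : Fin n → Fin n → ℝ := fun i k =>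
    (∑ j, |A i k j|) + p i k + ∫ τ in Set.Icc (0:ℝ) T, q i k τ with hCdef
  have hqint : ∀ i k, IntegrableOn (q i k) (Set.Icc (0:ℝ) T) :=
    fun i k => ((hqc i k).continuousOn).integrableOn_compact isCompact_Icc
  have hCnn : ∀ i k, 0 ≤ C i k := by
    intro i k
    have h1 : (0:ℝ) ≤ ∑ j, |A i k j| := Finset.sum_nonneg fun j _ => abs_nonneg _
    have h2 : (0:ℝ) ≤ ∫ τ in Set.Icc (0:ℝ) T, q i k τ :=
      setIntegral_nonneg measurableSet_Icc fun τ _ => hqnn i k τ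
    have h3 := hp i k
    simp only [hCdef]; linarith
  set L : ℝ := 1 + ∑ i, ∑ k, C i k with hLdef
  have hLC : ∀ i k, C i k + 1 ≤ L := by
    intro i k
    have h1 : C i k ≤ ∑ k', C i k' :=
      Finset.single_le_sum (fun j _ => hCnn i j) (Finset.mem_univ k)
    have h2 : ∑ k', C i k' ≤ ∑ i', ∑ k', C i' k' :=
      Finset.single_le_sum (fun i' _ => Finset.sum_nonneg fun j _ => hCnn i' j)
        (Finset.mem_univ i)
    simp only [hLdef]; linarith
  have hLpos : 0 < L := by
    have : (0:ℝ) ≤ ∑ i, ∑ k, C i k :=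
      Finset.sum_nonneg fun i _ => Finset.sum_nonneg fun j _ => hCnn i j
    simp only [hLdef]; linarith
  -- continuity of components on [0,∞)
  have hxcomp : ∀ j, ContinuousOn (fun s => x s j) (Set.Ici (-T)) :=
    fun j => (continuous_apply j).comp_continuousOn hxc
  -- main perturbation claim
  have key : ∀ ε > (0:ℝ), ∀ t ≥ (0:ℝ), ∀ k, 0 < x t k + ε * Real.exp (L * t) := by
    intro ε hε
    by_contra hcon
    push_neg at hcon
    obtain ⟨t₀, ht₀, k₀, hk₀⟩ := hcon
    set S : Set ℝ := {t | 0 ≤ t ∧ ∃ k, x t k + ε * Real.exp (L * t) ≤ 0} with hSdef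
    have hSne : S.Nonempty := ⟨t₀, ht₀, k₀, hk₀⟩
    have hSbdd : BddBelow S := ⟨0, fun s hs => hs.1⟩
    have hyc : ∀ k, ContinuousOn (fun t => x t k + ε * Real.exp (L * t)) (Set.Ici (0:ℝ)) := by
      intro k
      exact ((hxcomp k).mono (Set.Ici_subset_Ici.2 hTneg)).add
        (Continuous.continuousOn (continuous_const.mul
          (Real.continuous_exp.comp (continuous_const.mul continuous_id))))
    have hSclosed : IsClosed S := by
      have hS : S = ⋃ k, (Set.Ici (0:ℝ) ∩
          (fun t => x t k + ε * Real.exp (L * t)) ⁻¹' Set.Iic 0) := by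
        ext t
        simp only [hSdef, Set.mem_setOf_eq, Set.mem_iUnion, Set.mem_inter_iff,
          Set.mem_Ici, Set.mem_preimage, Set.mem_Iic]
        tauto
      rw [hS]
      exact isClosed_iUnion_of_finite fun k =>
        (hyc k).preimage_isClosed_of_isClosed isClosed_Ici isClosed_Iic
    set t₁ : ℝ := sInf S with ht₁def
    have ht₁S : t₁ ∈ S := hSclosed.csInf_mem hSne hSbdd
    obtain ⟨ht₁0, k, hk⟩ := ht₁S
    have ht₁pos : 0 < t₁ := by
      rcases ht₁0.lt_or_eq with h | h
      · exact h
      · exfalso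
        have hx0 : 0 ≤ x 0 k := hinit 0 ⟨hTneg, le_refl 0⟩ k
        rw [← h] at hk
        simp only [mul_zero, Real.exp_zero, mul_one] at hk
        linarith
    -- strict positivity before t₁
    have hpre : ∀ s, 0 ≤ s → s < t₁ → ∀ j, 0 < x s j + ε * Real.exp (L * s) := by
      intro s hs hst j
      by_contra h
      push_neg at h
      have : s ∈ S := ⟨hs, j, h⟩
      exact absurd (csInf_le hSbdd this) (not_le.2 hst)
    have hEpos : (0:ℝ) < ε * Real.exp (L * t₁) := by positivity
    -- lower bound at t₁ via limits
    have hbt₁ : ∀ j, -(ε * Real.exp (L * t₁)) ≤ x t₁ j := by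
      intro j
      have hne : (nhdsWithin t₁ (Set.Ioo (0:ℝ) t₁)).NeBot := by
        rw [← mem_closure_iff_nhdsWithin_neBot, closure_Ioo (ne_of_lt ht₁pos)]
        exact ⟨ht₁pos.le, le_refl t₁⟩
      have hcont : Filter.Tendsto (fun u => x u j)
          (nhdsWithin t₁ (Set.Ioo (0:ℝ) t₁)) (nhds (x t₁ j)) := by
        have h1 : ContinuousWithinAt (fun u => x u j) (Set.Ici (-T)) t₁ :=
          (hxcomp j) t₁ (by simp only [Set.mem_Ici]; linarith)
        exact h1.tendsto.mono_left (nhdsWithin_mono _ (fun u hu => by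
          simp only [Set.mem_Ici]; have := hu.1; linarith))
      refine ge_of_tendsto hcont ?_
      filter_upwards [self_mem_nhdsWithin] with u hu
      have h1 := hpre u hu.1.le hu.2 j
      have h2 : Real.exp (L * u) ≤ Real.exp (L * t₁) :=
        Real.exp_le_exp.2 (mul_le_mul_of_nonneg_left (le_of_lt hu.2) hLpos.le)
      nlinarith
    -- lower bound on [-T, t₁]
    have hbound : ∀ s, -T ≤ s → s ≤ t₁ → ∀ j,
        -(ε * Real.exp (L * t₁)) ≤ x s j := by
      intro s hsT hst j
      rcases le_or_gt s 0 with h0 | h0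
      · have := hinit s ⟨hsT, h0⟩ j
        linarith
      · have hexp : Real.exp (L * s) ≤ Real.exp (L * t₁) :=
          Real.exp_le_exp.2 (mul_le_mul_of_nonneg_left hst hLpos.le)
        rcases lt_or_eq_of_le hst with h | h
        · have := hpre s h0.le h j
          nlinarith
        · rw [h]; exact hbt₁ j
    have hkeq : x t₁ k = -(ε * Real.exp (L * t₁)) :=
      le_antisymm (by linarith) (hbound t₁ (by linarith) le_rfl k)
    set i : Fin n := σ t₁ with hidef
    set E : ℝ := ε * Real.exp (L * t₁) with hEdef
    -- the integral term
    set g : ℝ → Fin n → ℝ := fun τ => fun j => q i j τ * x (t₁ - τ) j with hgdef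
    have hgcont : ContinuousOn g (Set.Icc (0:ℝ) T) := by
      rw [continuousOn_pi]
      intro j
      refine ((hqc i j).continuousOn).mul ?_
      refine (hxcomp j).comp ((continuous_const.sub continuous_id).continuousOn) ?_
      intro τ hτ
      simp only [Set.mem_Ici, id_eq]
      have := hτ.2; linarith
    have hgzero : Set.EqOn g 0 (Set.Ioi T) := by
      intro τ hτ
      funext j
      have : q i j τ = 0 := hqsupp i j τ (fun h => absurd h.2 (not_le.2 hτ))
      simp [hgdef, this]
    have hgInt1 : IntegrableOn g (Set.Icc (0:ℝ) T) :=
      hgcont.integrableOn_compact isCompact_Icc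
    have hgInt2 : IntegrableOn g (Set.Ioi T) :=
      (integrableOn_congr_fun hgzero measurableSet_Ioi).2 (integrableOn_zero)
    have hdisj : Disjoint (Set.Icc (0:ℝ) T) (Set.Ioi T) :=
      (Set.Iic_disjoint_Ioi le_rfl).mono_left (fun τ hτ => hτ.2)
    have hgInt : IntegrableOn g (Set.Ici (0:ℝ)) := by
      rw [← Set.Icc_union_Ioi_eq_Ici hT]
      exact hgInt1.union hgInt2
    have hcomp : (∫ τ in Set.Ici (0:ℝ), g τ) k = ∫ τ in Set.Ici (0:ℝ), g τ k := by
      have := (ContinuousLinearMap.proj (R := ℝ) (φ := fun _ : Fin n => ℝ) k).integral_comp_comm hgInt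
      simpa using this.symm
    have hgkInt1 : IntegrableOn (fun τ => g τ k) (Set.Icc (0:ℝ) T) :=
      (ContinuousLinearMap.proj (R := ℝ) (φ := fun _ : Fin n => ℝ) k).integrable_comp hgInt1
    have hgkInt2 : IntegrableOn (fun τ => g τ k) (Set.Ioi T) :=
      (ContinuousLinearMap.proj (R := ℝ) (φ := fun _ : Fin n => ℝ) k).integrable_comp hgInt2
    have hsplit : ∫ τ in Set.Ici (0:ℝ), g τ k = ∫ τ in Set.Icc (0:ℝ) T, g τ k := by
      rw [← Set.Icc_union_Ioi_eq_Ici hT,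
        setIntegral_union hdisj measurableSet_Ioi hgkInt1 hgkInt2]
      have h0 : ∫ τ in Set.Ioi T, g τ k = 0 := by
        have hz : ∀ τ ∈ Set.Ioi T, g τ k = (fun _ : ℝ => (0:ℝ)) τ := by
          intro τ hτ; rw [hgzero hτ]; rfl
        rw [setIntegral_congr_fun measurableSet_Ioi hz, integral_zero]
      rw [h0, add_zero]
    have hIbound : -((∫ τ in Set.Icc (0:ℝ) T, q i k τ) * E) ≤
        ∫ τ in Set.Icc (0:ℝ) T, g τ k := by
      have h1 : ∫ τ in Set.Icc (0:ℝ) T, q i k τ * (-E) ≤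
          ∫ τ in Set.Icc (0:ℝ) T, g τ k := by
        refine setIntegral_mono_on ((hqint i k).mul_const _) hgkInt1 measurableSet_Icc ?_
        intro τ hτ
        have hx : -E ≤ x (t₁ - τ) k := by
          refine hbound (t₁ - τ) (by linarith [hτ.2]) (by linarith [hτ.1]) k
        exact mul_le_mul_of_nonneg_left hx (hqnn i k τ)
      rw [integral_mul_const] at h1
      linarith
    -- bound on the mulVec term
    have hmv : -((∑ j, |A i k j|) * E) ≤ (A i).mulVec (x t₁) k := by
      have hterm : ∀ j, -(|A i k j| * E) ≤ A i k j * x t₁ j := by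
        intro j
        by_cases hj : j = k
        · subst hj
          rw [hkeq]
          have h1 : A i j j * -E = -(A i j j * E) := by ring
          rw [h1, neg_le_neg_iff]
          exact mul_le_mul_of_nonneg_right (le_abs_self _) hEpos.le
        · have hAnn : 0 ≤ A i k j := hA i k j (fun h => hj h.symm)
          have hx : -E ≤ x t₁ j := hbound t₁ (by linarith) le_rfl j
          have habs : A i k j ≤ |A i k j| := le_abs_self _
          nlinarith
      have hsum := Finset.sum_le_sum (fun j (_ : j ∈ Finset.univ) => hterm j)
      have hlhs : ∑ j, -(|A i k j| * E) = -((∑ j, |A i k j|) * E) := by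
        rw [Finset.sum_neg_distrib, ← Finset.sum_mul]
      rw [hlhs] at hsum
      simpa [Matrix.mulVec, dotProduct] using hsum
    -- bound on the p term
    have hpt : -(p i k * E) ≤ p i k * x (t₁ - d i k) k := by
      have hdm := hd i k
      have hx : -E ≤ x (t₁ - d i k) k :=
        hbound (t₁ - d i k) (by linarith [hdm.2]) (by linarith [hdm.1]) k
      nlinarith [hp i k]
    -- total bound on the RHS
    have hrk : -(C i k * E) ≤ swRHS σ A p d q x t₁ k := by
      have hunfold : swRHS σ A p d q x t₁ k =
          (A i).mulVec (x t₁) k + p i k * x (t₁ - d i k) k +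
            (∫ τ in Set.Ici (0:ℝ), g τ) k := by
        simp only [swRHS, Pi.add_apply, ← hidef, hgdef]
      rw [hunfold, hcomp, hsplit]
      simp only [hCdef]
      linarith
    -- the derivative of the perturbed function at t₁
    have hdk : HasDerivAt (fun t => x t k) (swRHS σ A p d q x t₁ k) t₁ :=
      hasDerivAt_pi.1 (hode t₁ ht₁pos) k
    have hexpd : HasDerivAt (fun t => Real.exp (L * t)) (Real.exp (L * t₁) * L) t₁ := by
      simpa [mul_comm] using ((hasDerivAt_id t₁).const_mul L).exp
    have hyd : HasDerivAt (fun t => x t k + ε * Real.exp (L * t))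
        (swRHS σ A p d q x t₁ k + ε * (Real.exp (L * t₁) * L)) t₁ :=
      hdk.add (hexpd.const_mul ε)
    have hDpos : 0 < swRHS σ A p d q x t₁ k + ε * (Real.exp (L * t₁) * L) := by
      have h1 := hLC i k
      have h2 : ε * (Real.exp (L * t₁) * L) = E * L := by rw [hEdef]; ring
      nlinarith
    -- slope nonpositive from the left
    have hslope : Filter.Tendsto
        (slope (fun t => x t k + ε * Real.exp (L * t)) t₁)
        (nhdsWithin t₁ (Set.Iio t₁))
        (nhds (swRHS σ A p d q x t₁ k + ε * (Real.exp (L * t₁) * L))) := by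
      have h := (hyd.hasDerivWithinAt (s := Set.Iio t₁))
      rw [hasDerivWithinAt_iff_tendsto_slope] at h
      have hds : Set.Iio t₁ \ {t₁} = Set.Iio t₁ :=
        Set.diff_singleton_eq_self (fun h' => lt_irrefl t₁ h')
      rwa [hds] at h
    have hD0 : swRHS σ A p d q x t₁ k + ε * (Real.exp (L * t₁) * L) ≤ 0 := by
      refine le_of_tendsto hslope ?_
      have hmem : Set.Ioo (0:ℝ) t₁ ∈ nhdsWithin t₁ (Set.Iio t₁) := by
        rw [mem_nhdsWithin]
        exact ⟨Set.Ioi 0, isOpen_Ioi, ht₁pos, fun s hs => ⟨hs.1, hs.2⟩⟩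
      filter_upwards [hmem] with s hs
      have h1 := hpre s hs.1.le hs.2 k
      rw [slope_def_field]
      apply le_of_lt
      apply div_neg_of_pos_of_neg
      · linarith
      · linarith [hs.2]
    linarith
  -- conclude
  intro t ht k
  by_contra hneg
  push_neg at hneg
  have hE : 0 < Real.exp (L * t) := Real.exp_pos (L * t)
  have hεpos : 0 < -x t k / (2 * Real.exp (L * t)) :=
    div_pos (neg_pos.2 hneg) (by positivity)
  have hkey := key (-x t k / (2 * Real.exp (L * t))) hεpos t ht k
  have heq : -x t k / (2 * Real.exp (L * t)) * Real.exp (L * t) = -x t k / 2 := by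
    field_simp
  rw [heq] at hkey
  linarith
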